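/- Let λ = (λ_1, …, λ_p) be a partition of r, let d ∈ {1, …, p}, and define a new partition λ~ = (λ~_1, …, λ~_{p−d+1}) of r by λ~_1 = λ_1 + … + λ_d and λ~_t = λ_{t+d−1} for 2 ≤ t ≤ p−d+1. Then for every j ∈ {1, …, r} and m ∈ ℤ, the pair (j, m) is non-negative of level d with respect to λ if and only if m ≥ 1 − λ~(j), where λ~(j) = min{t : λ~_1 + … + λ~_t ≥ j}. -/

import Mathlib

open Finset

/-- The partial sums `μ_t = λ_1 + ⋯ + λ_t` of a tuple `λ : Fin p → ℕ`
(with `μ_0 = 0`); on the Lean side `partialSum lam t = ∑_{i < t} λ_i`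
with `0`-based indexing of `λ`. -/
def partialSum {p : ℕ} (lam : Fin p → ℕ) (t : ℕ) : ℕ :=
  ∑ i ∈ univ.filter (fun i : Fin p => (i : ℕ) < t), lam i

/-- `λ(j) = min { t : μ_t ≥ j }` (for `1 ≤ j ≤ r` this minimum lies in `{1, …, p}`). -/
noncomputable def lamIdx {p : ℕ} (lam : Fin p → ℕ) (j : ℕ) : ℕ :=
  sInf {t : ℕ | j ≤ partialSum lam t}

/-- The pair `(j, m)` is non-negative of level `d` with respect to `λ`:
either `m ≥ 0`, or for every pair of tuples `(j_1, …, j_p) ∈ ℕ^p`, `(m_1, …, m_p) ∈ ℤ^p`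
with `j_k ≤ λ_k`, `Σ j_k = j`, `Σ m_k = m` and `m_k = 0` whenever `j_k = 0`,
either some `m_k > 0`, or there are at least `d` indices `k` with `m_k = 0` and `j_k > 0`. -/
def NonNegOfLevel {p : ℕ} (lam : Fin p → ℕ) (d : ℕ) (j : ℕ) (m : ℤ) : Prop :=
  0 ≤ m ∨
    ∀ (jv : Fin p → ℕ) (mv : Fin p → ℤ),
      (∀ k, jv k ≤ lam k) → (∑ k, jv k) = j → (∑ k, mv k) = m →
      (∀ k, jv k = 0 → mv k = 0) →
      ((∃ k, 0 < mv k) ∨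
        d ≤ (univ.filter (fun k => mv k = 0 ∧ 0 < jv k)).card)

lemma partialSum_zero {p : ℕ} (lam : Fin p → ℕ) : partialSum lam 0 = 0 := by
  simp [partialSum]

lemma partialSum_succ {p : ℕ} (lam : Fin p → ℕ) {t : ℕ} (ht : t < p) :
    partialSum lam (t + 1) = partialSum lam t + lam ⟨t, ht⟩ := by
  unfold partialSum
  rw [show (univ.filter fun i : Fin p => (i : ℕ) < t + 1)
      = insert (⟨t, ht⟩ : Fin p) (univ.filter fun i : Fin p => (i : ℕ) < t) by
    ext i; simp [Fin.ext_iff]; omega]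
  rw [Finset.sum_insert (by simp)]
  ring

lemma partialSum_of_ge {p : ℕ} (lam : Fin p → ℕ) {t : ℕ} (ht : p ≤ t) :
    partialSum lam t = ∑ k, lam k := by
  unfold partialSum
  congr 1
  rw [Finset.filter_true_of_mem]
  intro i _
  exact lt_of_lt_of_le i.isLt ht

lemma partialSum_mono {p : ℕ} (lam : Fin p → ℕ) : Monotone (partialSum lam) := by
  intro a b hab
  apply Finset.sum_le_sum_of_subset
  intro i; simp only [Finset.mem_filter, Finset.mem_univ, true_and]
  omega

lemma card_filter_val_lt {p : ℕ} {n : ℕ} (hn : n ≤ p) :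
    (univ.filter fun k : Fin p => (k : ℕ) < n).card = n := by
  induction n with
  | zero => simp
  | succ n ih =>
    have hnp : n < p := hn
    rw [show (univ.filter fun k : Fin p => (k : ℕ) < n + 1)
        = insert (⟨n, hnp⟩ : Fin p) (univ.filter fun k : Fin p => (k : ℕ) < n) by
      ext i; simp [Fin.ext_iff]; omega]
    rw [Finset.card_insert_of_notMem (by simp), ih (le_of_lt hnp)]

lemma sum_le_partialSum_card {p : ℕ} (lam : Fin p → ℕ)
    (hanti : ∀ k l : Fin p, k ≤ l → lam l ≤ lam k) (S : Finset (Fin p)) :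
    ∑ k ∈ S, lam k ≤ partialSum lam S.card := by
  induction S using Finset.induction_on_max with
  | empty => simp [partialSum_zero]
  | insert a s ha ih =>
    have hsub : s ⊆ univ.filter (fun i : Fin p => (i : ℕ) < (a : ℕ)) := by
      intro x hx
      simp only [Finset.mem_filter, Finset.mem_univ, true_and]
      exact ha x hx
    have hcard : s.card ≤ (a : ℕ) := by
      have := Finset.card_le_card hsub
      rwa [card_filter_val_lt (le_of_lt a.isLt)] at this
    have hcp : s.card < p := lt_of_le_of_lt hcard a.isLt
    have hanotmem : a ∉ s := fun h => lt_irrefl a (ha a h)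
    rw [Finset.sum_insert hanotmem, Finset.card_insert_of_notMem hanotmem,
      partialSum_succ lam hcp]
    have hla : lam a ≤ lam ⟨s.card, hcp⟩ := by
      apply hanti
      simp [Fin.le_def, hcard]
    omega

/-- For the new partition `λ~ = (μ_d, λ_{d+1}, …, λ_p)` of `r`, the pair `(j, m)` is
non-negative of level `d` with respect to `λ` if and only if `m ≥ 1 − λ~(j)`.
Here `tlam : Fin (p - d + 1) → ℕ` is `λ~` with `0`-based indexing:
`tlam 0 = μ_d` and `tlam t = λ_{t + d}` (1-based `λ`-index) for `t ≥ 1`. -/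
theorem stmt2 (r p : ℕ) (hp : 1 ≤ p) (lam : Fin p → ℕ)
    (hpos : ∀ k, 1 ≤ lam k) (hanti : ∀ k l : Fin p, k ≤ l → lam l ≤ lam k)
    (hsum : ∑ k, lam k = r)
    (d : ℕ) (hd1 : 1 ≤ d) (hdp : d ≤ p)
    (tlam : Fin (p - d + 1) → ℕ)
    (htlam0 : ∀ t : Fin (p - d + 1), (t : ℕ) = 0 → tlam t = partialSum lam d)
    (htlam1 : ∀ t : Fin (p - d + 1), ∀ _ : 1 ≤ (t : ℕ),
      tlam t = lam ⟨(t : ℕ) + d - 1, by have := t.isLt; omega⟩)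
    (j : ℕ) (hj1 : 1 ≤ j) (hjr : j ≤ r) (m : ℤ) :
    NonNegOfLevel lam d j m ↔ 1 - (lamIdx tlam j : ℤ) ≤ m := by

  -- basic facts about L = lamIdx lam j
  set L := lamIdx lam j with hLdef
  have hset_p : j ≤ partialSum lam p := by
    rw [partialSum_of_ge lam le_rfl, hsum]; exact hjr
  have hne : {t : ℕ | j ≤ partialSum lam t}.Nonempty := ⟨p, hset_p⟩
  have hLp : L ≤ p := Nat.sInf_le hset_p
  have hLmem : j ≤ partialSum lam L := Nat.sInf_mem hne
  have hL1 : 1 ≤ L := by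
    by_contra h
    have hL0 : L = 0 := by omega
    rw [hL0, partialSum_zero] at hLmem
    omega
  have hLlt : ∀ t, t < L → partialSum lam t < j := by
    intro t ht
    by_contra h
    push_neg at h
    have : L ≤ t := Nat.sInf_le h
    omega
  -- the value C of lamIdx tlam j
  set C : ℕ := if L ≤ d then 1 else L - d + 1 with hCdef
  have hC1 : 1 ≤ C := by rw [hCdef]; split <;> omega
  have hCL : C ≤ L := by rw [hCdef]; split <;> omega
  have hLCd : L - C ≤ d - 1 := by rw [hCdef]; split <;> omega
  -- partial sums of tlam
  have hq : ∀ t, 1 ≤ t → t ≤ p - d + 1 → partialSum tlam t = partialSum lam (t + d - 1) := by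
    intro t
    induction t with
    | zero => omega
    | succ t ih =>
      intro _ ht2
      rcases Nat.eq_or_lt_of_le (show 1 ≤ t + 1 from le_refl 1 |>.trans (by omega)) with h1 | h1
      · -- t + 1 = 1, i.e., t = 0
        have ht0 : t = 0 := by omega
        subst ht0
        rw [show (0:ℕ) + 1 + d - 1 = d by omega,
          partialSum_succ tlam (show 0 < p - d + 1 by omega), partialSum_zero,
          htlam0 ⟨0, by omega⟩ rfl, Nat.zero_add]
      · have ht1 : 1 ≤ t := by omega
        have htlt : t < p - d + 1 := by omega
        rw [partialSum_succ tlam htlt, ih ht1 (by omega)]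
        rw [htlam1 ⟨t, htlt⟩ ht1]
        have hidx : t + d - 1 < p := by omega
        rw [show partialSum lam (t + 1 + d - 1) = partialSum lam ((t + d - 1) + 1) by
          congr 1; omega]
        rw [partialSum_succ lam hidx]
  have htl : ∀ t, 1 ≤ t → partialSum tlam t = partialSum lam (t + d - 1) := by
    intro t ht
    by_cases h : t ≤ p - d + 1
    · exact hq t ht h
    · have h1 : partialSum tlam t = ∑ k, tlam k := partialSum_of_ge tlam (by omega)
      have h2 : (∑ k, tlam k) = partialSum tlam (p - d + 1) :=
        (partialSum_of_ge tlam le_rfl).symm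
      rw [h1, h2, hq (p - d + 1) (by omega) le_rfl,
        show p - d + 1 + d - 1 = p by omega, partialSum_of_ge lam le_rfl,
        partialSum_of_ge lam (by omega)]
  have hCmem : j ≤ partialSum tlam C := by
    rw [htl C hC1]
    have : L ≤ C + d - 1 := by rw [hCdef]; split <;> omega
    exact le_trans hLmem (partialSum_mono lam this)
  have hC : lamIdx tlam j = C := by
    have hmemC : C ∈ {t : ℕ | j ≤ partialSum tlam t} := hCmem
    have hne2 : {t : ℕ | j ≤ partialSum tlam t}.Nonempty := ⟨C, hmemC⟩
    have hle1 : lamIdx tlam j ≤ C := Nat.sInf_le hmemC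
    have hc0mem : j ≤ partialSum tlam (lamIdx tlam j) := Nat.sInf_mem hne2
    have hc01 : 1 ≤ lamIdx tlam j := by
      by_contra h0
      have h0' : lamIdx tlam j = 0 := by omega
      rw [h0', partialSum_zero] at hc0mem
      omega
    rw [htl _ hc01] at hc0mem
    have hLle : L ≤ lamIdx tlam j + d - 1 :=
      Nat.sInf_le (show _ ∈ {t : ℕ | j ≤ partialSum lam t} from hc0mem)
    have hge : C ≤ lamIdx tlam j := by
      rw [hCdef]
      by_cases hld : L ≤ d
      · rw [if_pos hld]; exact hc01
      · rw [if_neg hld]; omega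
    omega
  rw [hC]
  constructor
  · -- forward direction: NonNegOfLevel → 1 - C ≤ m
    intro hnn
    by_contra hm
    push_neg at hm
    have hmC : m ≤ -(C : ℤ) := by omega
    have hm0 : m < 0 := by
      have : (0:ℤ) < C := by exact_mod_cast hC1
      omega
    rcases hnn with h | h
    · omega
    · -- construct jv and mv
      set jv : Fin p → ℕ := fun k => min (lam k) (j - partialSum lam (k : ℕ)) with hjvdef
      set f : ℕ → ℤ := fun t => if t < L then min 0 ((L : ℤ) - C - t) else m with hfdef
      set mv : Fin p → ℤ := fun k => f ((k : ℕ) + 1) - f (k : ℕ) with hmvdef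
      have hfval : ∀ t : ℕ, f t = if t < L then min 0 ((L : ℤ) - C - t) else m :=
        fun t => rfl
      have hjv_le : ∀ k, jv k ≤ lam k := fun k => min_le_left _ _
      have hps : ∀ t, t ≤ p → partialSum jv t = min j (partialSum lam t) := by
        intro t
        induction t with
        | zero => intro _; simp [partialSum_zero]
        | succ t ih =>
          intro ht
          have htp : t < p := ht
          rw [partialSum_succ jv htp, partialSum_succ lam htp, ih (le_of_lt htp)]
          show min j (partialSum lam t) + min (lam ⟨t, htp⟩) (j - partialSum lam (t : ℕ)) = _
          omega
      have hjv_sum : (∑ k, jv k) = j := by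
        have h1 := hps p le_rfl
        rw [partialSum_of_ge jv le_rfl] at h1
        rw [h1, partialSum_of_ge lam le_rfl, hsum]
        omega
      have hjv_pos : ∀ k : Fin p, (k : ℕ) < L → 0 < jv k := by
        intro k hk
        have h1 := hLlt k hk
        have h2 := hpos k
        show 0 < min (lam k) (j - partialSum lam (k : ℕ))
        omega
      have hjv_zero : ∀ k : Fin p, L ≤ (k : ℕ) → jv k = 0 := by
        intro k hk
        have h1 : partialSum lam L ≤ partialSum lam k := partialSum_mono lam hk
        show min (lam k) (j - partialSum lam (k : ℕ)) = 0
        omega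
      have hmv_sum : (∑ k, mv k) = m := by
        rw [hmvdef]
        rw [Fin.sum_univ_eq_sum_range (fun i => f (i + 1) - f i) p]
        rw [Finset.sum_range_sub f p]
        have hf0 : f 0 = 0 := by
          rw [hfval 0, if_pos (by omega)]
          push_cast
          omega
        have hfp : f p = m := by
          rw [hfval p, if_neg (by omega)]
        rw [hf0, hfp]; ring
      have hmv_zero_ge : ∀ k : Fin p, L ≤ (k : ℕ) → mv k = 0 := by
        intro k hk
        show f ((k:ℕ) + 1) - f (k:ℕ) = 0
        rw [hfval ((k:ℕ) + 1), hfval (k:ℕ), if_neg (by omega), if_neg (by omega)]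
        ring
      have hmv_zero_lt : ∀ k : Fin p, (k : ℕ) < L - C → mv k = 0 := by
        intro k hk
        show f ((k:ℕ) + 1) - f (k:ℕ) = 0
        rw [hfval ((k:ℕ) + 1), hfval (k:ℕ), if_pos (by omega), if_pos (by omega)]
        push_cast
        omega
      have hmv_neg : ∀ k : Fin p, L - C ≤ (k : ℕ) → (k : ℕ) < L → mv k < 0 := by
        intro k hk1 hk2
        show f ((k:ℕ) + 1) - f (k:ℕ) < 0
        rw [hfval ((k:ℕ) + 1), hfval (k:ℕ)]
        by_cases h : (k:ℕ) + 1 < L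
        · rw [if_pos h, if_pos hk2]
          push_cast
          omega
        · rw [if_neg h, if_pos hk2]
          omega
      have hmv_nonpos : ∀ k : Fin p, mv k ≤ 0 := by
        intro k
        by_cases h1 : L ≤ (k:ℕ)
        · rw [hmv_zero_ge k h1]
        · push_neg at h1
          by_cases h2 : (k:ℕ) < L - C
          · rw [hmv_zero_lt k h2]
          · exact le_of_lt (hmv_neg k (by omega) h1)
      have hzero : ∀ k, jv k = 0 → mv k = 0 := by
        intro k hk
        apply hmv_zero_ge
        by_contra h
        push_neg at h
        have := hjv_pos k h
        omega
      rcases h jv mv hjv_le hjv_sum hmv_sum hzero with ⟨k, hk⟩ | hcard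
      · have := hmv_nonpos k; omega
      · have hfilt : (univ.filter fun k => mv k = 0 ∧ 0 < jv k)
            = univ.filter fun k : Fin p => (k : ℕ) < L - C := by
          ext k
          simp only [Finset.mem_filter, Finset.mem_univ, true_and]
          constructor
          · rintro ⟨hmk, hjk⟩
            by_contra hcon
            push_neg at hcon
            by_cases h1 : (k:ℕ) < L
            · have := hmv_neg k hcon h1; omega
            · push_neg at h1
              have := hjv_zero k h1; omega
          · intro hk
            exact ⟨hmv_zero_lt k hk, hjv_pos k (by omega)⟩
        rw [hfilt, card_filter_val_lt (by omega)] at hcard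
        omega
  · -- backward direction
    intro hm
    by_cases hm0 : 0 ≤ m
    · exact Or.inl hm0
    · push_neg at hm0
      right
      intro jv mv hle hjsum hmsum hzero
      by_cases hex : ∃ k, 0 < mv k
      · exact Or.inl hex
      · right
        push_neg at hex
        -- C must be L - d + 1 and m ≥ d - L
        have hLd : ¬ (L ≤ d) := by
          intro h
          rw [hCdef, if_pos h] at hm
          simp at hm
          omega
        have hCval : C = L - d + 1 := by rw [hCdef, if_neg hLd]
        have hmge : (d : ℤ) - L ≤ m := by
          rw [hCval] at hm
          omega
        set Supp := univ.filter (fun k => 0 < jv k) with hSuppdef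
        set Neg := univ.filter (fun k => mv k < 0) with hNegdef
        have hNS : Neg ⊆ Supp := by
          intro k hk
          simp only [hNegdef, hSuppdef, Finset.mem_filter, Finset.mem_univ, true_and] at *
          by_contra h
          push_neg at h
          have hjk : jv k = 0 := by omega
          have := hzero k hjk
          omega
        have hZ : (univ.filter fun k => mv k = 0 ∧ 0 < jv k) = Supp \ Neg := by
          ext k
          simp only [hSuppdef, hNegdef, Finset.mem_filter, Finset.mem_univ, true_and,
            Finset.mem_sdiff]
          constructor
          · rintro ⟨h1, h2⟩; exact ⟨h2, by omega⟩
          · rintro ⟨h1, h2⟩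
            have := hex k
            exact ⟨by omega, h1⟩
        -- L ≤ Supp.card
        have hsupp : L ≤ Supp.card := by
          have h1 : (∑ k, jv k) = ∑ k ∈ Supp, jv k := by
            refine (Finset.sum_filter_of_ne ?_).symm
            intro k _ h
            omega
          have h2 : (∑ k ∈ Supp, jv k) ≤ ∑ k ∈ Supp, lam k :=
            Finset.sum_le_sum (fun k _ => hle k)
          have h3 := sum_le_partialSum_card lam hanti Supp
          have h4 : j ≤ partialSum lam Supp.card := by omega
          exact Nat.sInf_le h4
        -- Neg.card ≤ -m
        have hneg : (Neg.card : ℤ) ≤ -m := by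
          have h1 : (∑ k, mv k) = ∑ k ∈ Neg, mv k := by
            refine (Finset.sum_filter_of_ne ?_).symm
            intro k _ h
            have := hex k
            omega
          have h2 : (∑ k ∈ Neg, mv k) ≤ ∑ k ∈ Neg, (-1 : ℤ) := by
            apply Finset.sum_le_sum
            intro k hk
            simp only [hNegdef, Finset.mem_filter, Finset.mem_univ, true_and] at hk
            omega
          rw [Finset.sum_const, nsmul_eq_mul] at h2
          rw [h1] at hmsum
          omega
        rw [hZ, Finset.card_sdiff_of_subset hNS]
        have h5 : Neg.card ≤ Supp.card := Finset.card_le_card hNS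
        omega
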